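/- Linear Programming Bound for orthogonal arrays: if a real polynomial f(z) = Σ_{i=0}^n f_i K_i^{(n,q)}(z) satisfies f_0 > 0, f_i ≤ 0 for i = τ+1, ..., n, f(0) > 0, and f(i) ≥ 0 for i = 1,...,n, then every code C ⊆ F_q^n whose dual distance distribution satisfies B'_i = 0 for 1 ≤ i ≤ τ (i.e. C is a τ-design) has |C| ≥ f(0)/f_0. -/

import Mathlib

open Finset

/-- Generalized binomial coefficient `C(z, j) = z(z-1)⋯(z-j+1)/j!` for real `z`. -/
noncomputable def realChoose (z : ℝ) (j : ℕ) : ℝ :=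
  (∏ k ∈ Finset.range j, (z - k)) / (Nat.factorial j)

/-- The Krawtchouk polynomial `K_i^{(n,q)}(z)`. -/
noncomputable def kraw (n q i : ℕ) (z : ℝ) : ℝ :=
  ∑ j ∈ Finset.range (i + 1),
    (-1 : ℝ) ^ j * ((q : ℝ) - 1) ^ (i - j) * (q : ℝ) ^ j *
      ((n - j).choose (n - i) : ℝ) * realChoose z j

/-- The distance distribution `B_i` of a code `C ⊆ F_q^n`. -/
noncomputable def distDistrib {n q : ℕ} (C : Finset (Fin n → Fin q)) (i : ℕ) : ℝ :=
  (((C ×ˢ C).filter (fun p => hammingDist p.1 p.2 = i)).card : ℝ) / (C.card : ℝ)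

/-- The dual distance distribution (MacWilliams transform) `B'_i` of a code. -/
noncomputable def dualDistDistrib {n q : ℕ} (C : Finset (Fin n → Fin q)) (i : ℕ) : ℝ :=
  (∑ j ∈ Finset.range (n + 1), distDistrib C j * kraw n q i j) / (C.card : ℝ)

open Polynomial

lemma realChoose_natCast (w j : ℕ) : realChoose (w : ℝ) j = (w.choose j : ℝ) := by
  rcases lt_or_ge w j with h | h
  · rw [realChoose, Nat.choose_eq_zero_of_lt h,
      Finset.prod_eq_zero (Finset.mem_range.2 h) (by simp : (w:ℝ) - (w:ℕ) = 0)]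
    simp
  · have hp : ∏ k ∈ Finset.range j, ((w:ℝ) - k) = (w.descFactorial j : ℝ) := by
      rw [Nat.descFactorial_eq_prod_range, Nat.cast_prod]
      refine Finset.prod_congr rfl fun k hk => ?_
      have hkw : k ≤ w := ((Finset.mem_range.1 hk).le.trans h)
      rw [Nat.cast_sub hkw]
    rw [realChoose, hp, Nat.descFactorial_eq_factorial_mul_choose]
    push_cast
    rw [mul_comm, mul_div_assoc, div_self (by positivity), mul_one]

section PolyLemmas
variable {R : Type*} [CommRing R]

lemma one_add_CX_pow (c : R) (m : ℕ) :
    (1 + C c * X) ^ m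
      = ∑ k ∈ range (m+1), C ((m.choose k : R) * c ^ k) * X ^ k := by
  rw [add_comm, add_pow]
  refine Finset.sum_congr rfl fun k _ => ?_
  rw [one_pow, mul_one, mul_pow, ← C_pow, C_mul, ← C_eq_natCast]
  ring

lemma coeff_one_add_CX_pow (c : R) (m i : ℕ) :
    ((1 + C c * X) ^ m).coeff i = (m.choose i : R) * c ^ i := by
  rw [one_add_CX_pow, finset_sum_coeff]
  simp only [coeff_C_mul, coeff_X_pow, mul_ite, mul_one, mul_zero]
  simp only [eq_comm (a := i)]
  rw [Finset.sum_ite_eq' (range (m+1)) i]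
  split_ifs with hi
  · rfl
  · rw [Nat.choose_eq_zero_of_lt (by simpa using hi)]
    simp

end PolyLemmas


lemma kraw_eq_coeff {n k w : ℕ} (q : ℕ) (hw : w ≤ n) (hk : k ≤ n) :
    kraw n q k (w : ℝ) =
      ((1 + C (-1 : ℝ) * X) ^ w * (1 + C ((q:ℝ) - 1) * X) ^ (n - w)).coeff k := by
  have key : (1 + C (-1:ℝ) * X) ^ w * (1 + C ((q:ℝ)-1) * X) ^ (n - w)
      = ∑ j ∈ range (w+1),
          C ((w.choose j : ℝ) * (-(q:ℝ))^j) * (1 + C ((q:ℝ)-1)*X)^(n-j) * X^j := by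
    have h1 : (1 + C (-1:ℝ) * X) = C (-(q:ℝ)) * X + (1 + C ((q:ℝ)-1) * X) := by
      have : C (-1:ℝ) = C (-(q:ℝ)) + C ((q:ℝ)-1) := by rw [← C_add]; ring_nf
      rw [this]; ring
    rw [h1, add_pow, Finset.sum_mul]
    refine Finset.sum_congr rfl fun j hj => ?_
    have hjw : j ≤ w := Nat.lt_succ_iff.1 (mem_range.1 hj)
    have hpow : (1 + C ((q:ℝ)-1) * X) ^ (w - j) * (1 + C ((q:ℝ)-1) * X) ^ (n - w)
        = (1 + C ((q:ℝ)-1) * X) ^ (n - j) := by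
      rw [← pow_add]; congr 1; omega
    calc (C (-(q:ℝ)) * X) ^ j * (1 + C ((q:ℝ)-1) * X) ^ (w - j) * (w.choose j : ℝ[X])
          * (1 + C ((q:ℝ)-1) * X) ^ (n - w)
        = ((C (-(q:ℝ)))^j * (w.choose j : ℝ[X]))
            * ((1 + C ((q:ℝ)-1) * X) ^ (w-j) * (1 + C ((q:ℝ)-1) * X) ^ (n-w)) * X^j := by
          rw [mul_pow]; ring
      _ = C ((w.choose j : ℝ) * (-(q:ℝ))^j) * (1 + C ((q:ℝ)-1)*X)^(n-j) * X^j := by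
          rw [hpow, ← C_pow, ← C_eq_natCast, ← C_mul, mul_comm ((-(q:ℝ))^j)]
  rw [key, finset_sum_coeff]
  have hcoeff : ∀ j, (C ((w.choose j : ℝ) * (-(q:ℝ))^j) * (1 + C ((q:ℝ)-1)*X)^(n-j) * X^j).coeff k
      = if j ≤ k then (w.choose j : ℝ) * (-(q:ℝ))^j * (((n-j).choose (k-j) : ℝ) * ((q:ℝ)-1)^(k-j)) else 0 := by
    intro j
    rw [coeff_mul_X_pow', coeff_C_mul, coeff_one_add_CX_pow]
  simp only [hcoeff]
  set F : ℕ → ℝ := fun j => if j ≤ k then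
      (w.choose j : ℝ) * (-(q:ℝ))^j * (((n-j).choose (k-j) : ℝ) * ((q:ℝ)-1)^(k-j)) else 0 with hF
  set G : ℕ → ℝ := fun j => if j ≤ k then
      (-1:ℝ)^j * ((q:ℝ)-1)^(k-j) * (q:ℝ)^j * (((n-j).choose (n-k) : ℝ)) * (w.choose j : ℝ) else 0
    with hG
  have hL : kraw n q k (w : ℝ) = ∑ j ∈ range (n+1), G j := by
    have e1 : kraw n q k (w : ℝ) = ∑ j ∈ range (k+1), G j := by
      rw [kraw]
      refine Finset.sum_congr rfl fun j hj => ?_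
      have hjk : j ≤ k := Nat.lt_succ_iff.1 (mem_range.1 hj)
      rw [realChoose_natCast]
      simp only [hG, if_pos hjk]
    rw [e1]
    refine Finset.sum_subset (fun x hx => ?_) (fun j _ hj2 => ?_)
    · simp only [mem_range] at hx ⊢; omega
    · simp only [hG, if_neg (show ¬ j ≤ k by simp only [mem_range] at hj2; omega)]
  have hR : ∑ j ∈ range (w+1), F j = ∑ j ∈ range (n+1), F j := by
    refine Finset.sum_subset (fun x hx => ?_) (fun j _ hj2 => ?_)
    · simp only [mem_range] at hx ⊢; omega
    · have hwj : w < j := by simp only [mem_range] at hj2; omega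
      simp only [hF]
      split_ifs
      · rw [Nat.choose_eq_zero_of_lt hwj]; simp
      · rfl
  rw [hL, hR]
  refine Finset.sum_congr rfl fun j hj => ?_
  simp only [hF, hG]
  split_ifs with hjk
  · have h2 : (n-j).choose (n-k) = (n-j).choose (k-j) := by
      have e2 : (n-j) - (k-j) = n - k := by omega
      rw [← e2, Nat.choose_symm (by omega)]
    rw [h2]
    push_cast
    ring
  · rfl

section Char
variable (q : ℕ)

noncomputable def zeta : ℂ := Complex.exp (2 * Real.pi * Complex.I / q)

noncomputable def eps (a : ZMod q) : ℂ := zeta q ^ a.val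

variable {q}
variable (hq : 2 ≤ q)
include hq

lemma hzeta : IsPrimitiveRoot (zeta q) q :=
  Complex.isPrimitiveRoot_exp q (by omega)

lemma zeta_pow_mod (m : ℕ) : zeta q ^ m = zeta q ^ (m % q) := by
  conv_lhs => rw [← Nat.div_add_mod m q]
  rw [pow_add, pow_mul, (hzeta hq).pow_eq_one, one_pow, one_mul]


set_option linter.unusedSectionVars false in
lemma eps_zero : eps q (0 : ZMod q) = 1 := by
  haveI : NeZero q := ⟨by omega⟩
  rw [eps, ZMod.val_zero, pow_zero]

lemma eps_add (a b : ZMod q) : eps q (a + b) = eps q a * eps q b := by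
  haveI : NeZero q := ⟨by omega⟩
  rw [eps, ZMod.val_add, ← zeta_pow_mod hq, pow_add]; rfl

lemma eps_conj (a : ZMod q) : (starRingEnd ℂ) (eps q a) = eps q (-a) := by
  have h1 : eps q a * eps q (-a) = 1 := by
    rw [← eps_add hq, add_neg_cancel, eps_zero hq]
  have habs : ‖eps q a‖ = 1 := by
    have h2 : ‖zeta q‖ ^ q = 1 := by
      rw [← norm_pow, (hzeta hq).pow_eq_one, norm_one]
    have h3 : ‖zeta q‖ = 1 := by
      rcases (pow_eq_one_iff_cases.1 h2) with h | h | h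
      · omega
      · exact h
      · nlinarith [norm_nonneg (zeta q), h.1]
    rw [eps, norm_pow, h3, one_pow]
  calc (starRingEnd ℂ) (eps q a) = (eps q a)⁻¹ := (Complex.inv_eq_conj habs).symm
    _ = eps q (-a) := (eq_inv_of_mul_eq_one_right h1).symm

variable [NeZero q]

lemma sum_pow_val {x : ℂ} : ∑ a : ZMod q, x ^ a.val = ∑ i ∈ range q, x ^ i := by
  haveI : NeZero q := ⟨by omega⟩
  refine Finset.sum_nbij' (fun a => a.val) (fun i => (i : ZMod q)) ?_ ?_ ?_ ?_ ?_
  · intro a _; exact mem_range.2 a.val_lt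
  · intro i _; exact mem_univ _
  · intro a _; exact ZMod.natCast_rightInverse a
  · intro i hi; exact ZMod.val_cast_of_lt (mem_range.1 hi)
  · intro a _; rfl

lemma sum_eps_mul (b : ZMod q) :
    ∑ a : ZMod q, eps q (a * b) = if b = 0 then (q : ℂ) else 0 := by
  haveI : NeZero q := ⟨by omega⟩
  split_ifs with hb
  · subst hb
    simp only [mul_zero, eps_zero hq]
    rw [Finset.sum_const, Finset.card_univ, ZMod.card, nsmul_eq_mul, mul_one]
  · have he : ∀ a : ZMod q, eps q (a * b) = (zeta q ^ b.val) ^ a.val := by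
      intro a
      rw [eps, ZMod.val_mul, ← zeta_pow_mod hq, ← pow_mul, mul_comm a.val b.val]
    rw [Finset.sum_congr rfl (fun a _ => he a), sum_pow_val hq]
    have hx1 : zeta q ^ b.val ≠ 1 := by
      refine (hzeta hq).pow_ne_one_of_pos_of_lt ?_ b.val_lt
      exact (fun h => hb (by rwa [← ZMod.val_eq_zero]))
    rw [geom_sum_eq hx1]
    rw [← pow_mul, mul_comm b.val q, pow_mul, (hzeta hq).pow_eq_one, one_pow]
    simp

lemma sum_eps_ne_zero (u0 : ZMod q) :
    ∑ c ∈ Finset.univ.erase (0 : ZMod q), eps q (c * u0)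
      = (if u0 = 0 then (q:ℂ) else 0) - 1 := by
  have h := Finset.add_sum_erase Finset.univ (fun c => eps q (c * u0)) (mem_univ (0 : ZMod q))
  simp only [zero_mul, eps_zero hq] at h
  rw [sum_eps_mul hq] at h
  linear_combination h
lemma genfun (n : ℕ) (u : Fin n → ZMod q) :
    ∑ v : Fin n → ZMod q,
      Polynomial.C (∏ i, eps q (v i * u i)) * X ^ ((Finset.univ.filter fun i => v i ≠ 0).card)
    = (1 + C (-1:ℂ) * X) ^ ((Finset.univ.filter fun i => u i ≠ 0).card)
        * (1 + C ((q:ℂ)-1) * X) ^ (n - (Finset.univ.filter fun i => u i ≠ 0).card) := by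
  classical
  have step1 : ∀ v : Fin n → ZMod q,
      Polynomial.C (∏ i, eps q (v i * u i)) * X ^ ((Finset.univ.filter fun i => v i ≠ 0).card)
      = ∏ i, (Polynomial.C (eps q (v i * u i)) * X ^ (if v i = 0 then 0 else 1)) := by
    intro v
    rw [Finset.prod_mul_distrib, ← map_prod, Finset.prod_pow_eq_pow_sum]
    congr 2
    rw [Finset.card_filter]
    exact Finset.sum_congr rfl fun i _ => by by_cases h : v i = 0 <;> simp [h]
  rw [Finset.sum_congr rfl fun v _ => step1 v]
  rw [← Fintype.piFinset_univ, ← Finset.prod_univ_sum (t := fun _ => (Finset.univ : Finset (ZMod q)))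
    (f := fun i c => Polynomial.C (eps q (c * u i)) * X ^ (if c = 0 then 0 else 1))]
  have step2 : ∀ i : Fin n,
      (∑ c : ZMod q, Polynomial.C (eps q (c * u i)) * X ^ (if c = 0 then 0 else 1))
      = 1 + Polynomial.C ((if u i = 0 then (q:ℂ) else 0) - 1) * X := by
    intro i
    rw [← Finset.add_sum_erase Finset.univ _ (mem_univ (0 : ZMod q))]
    rw [if_pos rfl, pow_zero, zero_mul, eps_zero hq, map_one, mul_one]
    congr 1
    rw [← sum_eps_ne_zero hq, map_sum, Finset.sum_mul]
    refine Finset.sum_congr rfl fun c hc => ?_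
    rw [if_neg (Finset.ne_of_mem_erase hc), pow_one]
  rw [Finset.prod_congr rfl fun i _ => step2 i]
  rw [← Finset.prod_filter_mul_prod_filter_not Finset.univ (fun i => u i = 0)]
  have e1 : ∀ i ∈ Finset.univ.filter (fun i => u i = 0),
      1 + Polynomial.C ((if u i = 0 then (q:ℂ) else 0) - 1) * X = 1 + C ((q:ℂ)-1) * X := by
    intro i hi
    rw [if_pos (Finset.mem_filter.1 hi).2]
  have e2 : ∀ i ∈ Finset.univ.filter (fun i => ¬ u i = 0),
      1 + Polynomial.C ((if u i = 0 then (q:ℂ) else 0) - 1) * X = 1 + C (-1:ℂ) * X := by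
    intro i hi
    rw [if_neg (Finset.mem_filter.1 hi).2]
    norm_num
  rw [Finset.prod_congr rfl e1, Finset.prod_congr rfl e2,
    Finset.prod_const, Finset.prod_const]
  have hcard : (Finset.univ.filter (fun i => u i = 0)).card
      = n - (Finset.univ.filter (fun i => ¬ u i = 0)).card := by
    have := Finset.card_filter_add_card_filter_not (s := (Finset.univ : Finset (Fin n)))
      (p := fun i => u i = 0)
    simp only [Finset.card_univ, Fintype.card_fin] at this
    omega
  rw [hcard, mul_comm]
end Char

section Glue
variable {q : ℕ} (hq : 2 ≤ q) [NeZero q]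
include hq

/-- weight-k character sum equals polynomial coefficient -/
lemma char_sum_eq_coeff (n k : ℕ) (u : Fin n → ZMod q) :
    ∑ v ∈ Finset.univ.filter
        (fun v : Fin n → ZMod q => (Finset.univ.filter fun i => v i ≠ 0).card = k),
      ∏ i, eps q (v i * u i)
    = ((1 + C (-1:ℂ) * X) ^ ((Finset.univ.filter fun i => u i ≠ 0).card)
        * (1 + C ((q:ℂ)-1) * X) ^ (n - (Finset.univ.filter fun i => u i ≠ 0).card)).coeff k := by
  classical
  rw [← genfun hq n u, finset_sum_coeff]
  simp only [coeff_C_mul, coeff_X_pow, mul_ite, mul_one, mul_zero]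
  rw [Finset.sum_filter]
  refine Finset.sum_congr rfl fun v _ => ?_
  by_cases h : (Finset.univ.filter fun i => v i ≠ 0).card = k
  · rw [if_pos h, if_pos h.symm]
  · rw [if_neg h, if_neg (fun h' => h h'.symm)]

lemma kraw_complex (n k w : ℕ) (hw : w ≤ n) (hk : k ≤ n) :
    ((kraw n q k (w : ℝ) : ℝ) : ℂ)
    = ((1 + C (-1:ℂ) * X) ^ w * (1 + C ((q:ℂ)-1) * X) ^ (n - w)).coeff k := by
  rw [kraw_eq_coeff q hw hk]
  have hmap : ((1 + C (-1 : ℝ) * X) ^ w * (1 + C ((q:ℝ) - 1) * X) ^ (n - w)).map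
      (algebraMap ℝ ℂ)
      = (1 + C (-1:ℂ) * X) ^ w * (1 + C ((q:ℂ)-1) * X) ^ (n - w) := by
    simp only [Polynomial.map_mul, Polynomial.map_pow, Polynomial.map_add,
      Polynomial.map_one, Polynomial.map_C, Polynomial.map_X]
    push_cast
    norm_num
  rw [← hmap, Polynomial.coeff_map]
  rfl

/-- The key identity: Krawtchouk value as a character sum. -/
lemma kraw_char (n k : ℕ) (hk : k ≤ n) (u : Fin n → ZMod q) :
    ((kraw n q k ((Finset.univ.filter fun i => u i ≠ 0).card : ℝ) : ℝ) : ℂ)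
    = ∑ v ∈ Finset.univ.filter
        (fun v : Fin n → ZMod q => (Finset.univ.filter fun i => v i ≠ 0).card = k),
      ∏ i, eps q (v i * u i) := by
  have hwle : (Finset.univ.filter fun i => u i ≠ 0).card ≤ n := by
    simpa using Finset.card_filter_le Finset.univ (fun i => u i ≠ 0)
  rw [char_sum_eq_coeff hq n k u, kraw_complex hq n k _ hwle hk]

end Glue

section Pos

lemma hammingDist_eq_wt {n q : ℕ} (hq : 2 ≤ q) (x y : Fin n → Fin q) :
    hammingDist x y
      = (Finset.univ.filter fun i =>
          (((x i : ℕ) : ZMod q) - ((y i : ℕ) : ZMod q)) ≠ 0).card := by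
  haveI : NeZero q := ⟨by omega⟩
  rw [hammingDist]
  refine Finset.card_bij (fun i _ => i) ?_ ?_ ?_
  · intro i hi
    simp only [Finset.mem_filter, Finset.mem_univ, true_and] at hi ⊢
    intro hcontra
    apply hi
    have h2 : (((x i : ℕ) : ZMod q)) = (((y i : ℕ) : ZMod q)) := by
      rwa [sub_eq_zero] at hcontra
    have h3 : ((x i : ℕ)) = ((y i : ℕ)) := by
      have := congrArg ZMod.val h2
      rwa [ZMod.val_cast_of_lt (x i).isLt, ZMod.val_cast_of_lt (y i).isLt] at this
    exact Fin.ext h3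
  · intro a _ b _ h; exact h
  · intro i hi
    refine ⟨i, ?_, rfl⟩
    simp only [Finset.mem_filter, Finset.mem_univ, true_and] at hi ⊢
    intro hcontra
    apply hi
    rw [hcontra]
    simp

lemma kraw_pairsum_nonneg {n q : ℕ} (hq : 2 ≤ q) (k : ℕ) (hk : k ≤ n)
    (C : Finset (Fin n → Fin q)) :
    0 ≤ ∑ p ∈ C ×ˢ C, kraw n q k (hammingDist p.1 p.2) := by
  classical
  haveI : NeZero q := ⟨by omega⟩
  set em : (Fin n → Fin q) → (Fin n → ZMod q) := fun x i => ((x i : ℕ) : ZMod q) with hem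
  set Vk : Finset (Fin n → ZMod q) := Finset.univ.filter
      (fun v : Fin n → ZMod q => (Finset.univ.filter fun i => v i ≠ 0).card = k) with hVk
  set chi : (Fin n → ZMod q) → (Fin n → Fin q) → ℂ :=
      fun v x => ∏ i, eps q (v i * em x i) with hchi
  have hstep : ((∑ p ∈ C ×ˢ C, kraw n q k (hammingDist p.1 p.2) : ℝ) : ℂ)
      = ∑ v ∈ Vk, ((∑ x ∈ C, chi v x) * (starRingEnd ℂ) (∑ x ∈ C, chi v x)) := by
    rw [Complex.ofReal_sum]
    have hterm : ∀ p ∈ C ×ˢ C, ((kraw n q k (hammingDist p.1 p.2) : ℝ) : ℂ)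
        = ∑ v ∈ Vk, chi v p.1 * (starRingEnd ℂ) (chi v p.2) := by
      rintro ⟨x, y⟩ _
      have h1 : (hammingDist x y : ℝ)
          = ((Finset.univ.filter fun i => (em x i - em y i) ≠ 0).card : ℝ) := by
        rw [hammingDist_eq_wt hq]
      rw [h1, kraw_char hq n k hk (fun i => em x i - em y i)]
      refine Finset.sum_congr rfl fun v _ => ?_
      rw [hchi]
      simp only
      rw [map_prod, ← Finset.prod_mul_distrib]
      refine Finset.prod_congr rfl fun i _ => ?_
      rw [eps_conj hq, ← eps_add hq]
      congr 1
      ring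
    rw [Finset.sum_congr rfl hterm]
    rw [Finset.sum_comm]
    refine Finset.sum_congr rfl fun v _ => ?_
    rw [map_sum]
    rw [Finset.sum_product (f := fun p => chi v p.1 * (starRingEnd ℂ) (chi v p.2))]
    rw [Finset.sum_mul_sum]
  have hreal : (∑ p ∈ C ×ˢ C, kraw n q k (hammingDist p.1 p.2) : ℝ)
      = ∑ v ∈ Vk, Complex.normSq (∑ x ∈ C, chi v x) := by
    have : ((∑ p ∈ C ×ˢ C, kraw n q k (hammingDist p.1 p.2) : ℝ) : ℂ)
        = ((∑ v ∈ Vk, Complex.normSq (∑ x ∈ C, chi v x) : ℝ) : ℂ) := by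
      rw [hstep, Complex.ofReal_sum]
      exact Finset.sum_congr rfl fun v _ => (Complex.mul_conj _)
    exact_mod_cast this
  rw [hreal]
  exact Finset.sum_nonneg fun v _ => Complex.normSq_nonneg _

end Pos


lemma kraw_zero_eq_one (n q : ℕ) (z : ℝ) : kraw n q 0 z = 1 := by
  simp [kraw, realChoose]

theorem LP_bound_for_designs (n q τ : ℕ) (hn : 1 ≤ n) (hq : 2 ≤ q) (hτ : τ ≤ n)
    (f : ℝ → ℝ) (c : ℕ → ℝ)
    (hf : ∀ z : ℝ, f z = ∑ i ∈ Finset.range (n + 1), c i * kraw n q i z)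
    (hB1a : 0 < c 0) (hB1b : ∀ i : ℕ, τ + 1 ≤ i → i ≤ n → c i ≤ 0)
    (hB2a : 0 < f 0) (hB2b : ∀ i : ℕ, 1 ≤ i → i ≤ n → 0 ≤ f i)
    (C : Finset (Fin n → Fin q)) (hC : C.Nonempty)
    (hdesign : ∀ i : ℕ, 1 ≤ i → i ≤ τ → dualDistDistrib C i = 0) :
    f 0 / c 0 ≤ (C.card : ℝ) := by
  classical
  haveI : NeZero q := ⟨by omega⟩
  have hM0 : (0 : ℝ) < (C.card : ℝ) := by exact_mod_cast Finset.card_pos.2 hC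
  -- fiberwise summation
  have hfiber : ∀ g : ℕ → ℝ,
      ∑ j ∈ Finset.range (n+1),
        (((C ×ˢ C).filter (fun p => hammingDist p.1 p.2 = j)).card : ℝ) * g j
      = ∑ p ∈ C ×ˢ C, g (hammingDist p.1 p.2) := by
    intro g
    rw [← Finset.sum_fiberwise_of_maps_to
      (g := fun p : (Fin n → Fin q) × (Fin n → Fin q) => hammingDist p.1 p.2)
      (t := Finset.range (n+1))
      (fun p _ => Finset.mem_range.2 (Nat.lt_succ_of_le
        (le_trans hammingDist_le_card_fintype (le_of_eq (Fintype.card_fin n)))))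
      (f := fun p => g (hammingDist p.1 p.2))]
    refine Finset.sum_congr rfl fun j _ => ?_
    rw [Finset.sum_congr rfl (fun p hp => by
      rw [(Finset.mem_filter.1 hp).2] : ∀ p ∈ (C ×ˢ C).filter
        (fun p => hammingDist p.1 p.2 = j), g (hammingDist p.1 p.2) = g j)]
    rw [Finset.sum_const, nsmul_eq_mul]
  -- basic facts about the distance distribution
  have hBnn : ∀ i, 0 ≤ distDistrib C i := fun i => by
    rw [distDistrib]; positivity
  have hB0 : distDistrib C 0 = 1 := by
    rw [distDistrib]
    have : (C ×ˢ C).filter (fun p => hammingDist p.1 p.2 = 0) = C.diag := by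
      rw [Finset.diag_eq_filter]
      refine Finset.filter_congr fun p _ => ?_
      simp [hammingDist_eq_zero]
    rw [this, Finset.diag_card, div_self (ne_of_gt hM0)]
  have hsumB : ∀ kk, ∑ j ∈ Finset.range (n+1), distDistrib C j * kraw n q kk j
      = (1 / (C.card : ℝ)) * ∑ p ∈ C ×ˢ C, kraw n q kk (hammingDist p.1 p.2) := by
    intro kk
    rw [← hfiber (fun j => kraw n q kk (j:ℝ)), Finset.mul_sum]
    refine Finset.sum_congr rfl fun j _ => ?_
    rw [distDistrib]
    ring
  have hdual : ∀ kk, dualDistDistrib C kk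
      = (1 / (C.card : ℝ))^2 * ∑ p ∈ C ×ˢ C, kraw n q kk (hammingDist p.1 p.2) := by
    intro kk
    rw [dualDistDistrib, hsumB]
    ring
  have hdualnn : ∀ kk, kk ≤ n → 0 ≤ dualDistDistrib C kk := by
    intro kk hkk
    rw [hdual]
    have := kraw_pairsum_nonneg hq kk hkk C
    positivity
  have hdual0 : dualDistDistrib C 0 = 1 := by
    have hMne : ((C.card : ℝ)) ≠ 0 := ne_of_gt hM0
    have h2 : ∑ j ∈ Finset.range (n+1), distDistrib C j * kraw n q 0 (j:ℝ)
        = (1/((C.card : ℝ))) * ∑ p ∈ C ×ˢ C, (1:ℝ) := by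
      rw [hsumB 0]
      congr 1
      exact Finset.sum_congr rfl fun p _ => kraw_zero_eq_one n q _
    rw [dualDistDistrib, h2, Finset.sum_const, Finset.card_product, nsmul_eq_mul]
    push_cast
    field_simp
  -- the main chain
  set S : ℝ := ∑ i ∈ Finset.range (n+1), distDistrib C i * f (i : ℝ) with hS
  have h1 : f 0 ≤ S := by
    rw [hS, Finset.sum_range_succ']
    push_cast
    have : distDistrib C 0 * f 0 = f 0 := by rw [hB0, one_mul]
    rw [this]
    have h2 : 0 ≤ ∑ i ∈ Finset.range n, distDistrib C (i+1) * f ((i:ℝ)+1) := by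
      refine Finset.sum_nonneg fun i hi => ?_
      refine mul_nonneg (hBnn _) ?_
      have := hB2b (i+1) (by omega) (by
        have := Finset.mem_range.1 hi; omega)
      push_cast at this
      exact this
    linarith
  have h2 : S = ∑ kk ∈ Finset.range (n+1), c kk * ((C.card : ℝ) * dualDistDistrib C kk) := by
    rw [hS]
    have e1 : ∀ i ∈ Finset.range (n+1), distDistrib C i * f (i:ℝ)
        = ∑ kk ∈ Finset.range (n+1), c kk * (distDistrib C i * kraw n q kk (i:ℝ)) := by
      intro i _
      rw [hf, Finset.mul_sum]
      exact Finset.sum_congr rfl fun kk _ => by ring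
    rw [Finset.sum_congr rfl e1, Finset.sum_comm]
    refine Finset.sum_congr rfl fun kk _ => ?_
    rw [← Finset.mul_sum]
    congr 1
    have : dualDistDistrib C kk
        = (∑ j ∈ Finset.range (n + 1), distDistrib C j * kraw n q kk j) / (C.card : ℝ) := rfl
    rw [this]
    field_simp
  have h3 : S ≤ c 0 * (C.card : ℝ) := by
    rw [h2, Finset.sum_range_succ']
    have e0 : c 0 * ((C.card : ℝ) * dualDistDistrib C 0) = c 0 * (C.card : ℝ) := by
      rw [hdual0, mul_one]
    rw [e0]
    have e1 : ∑ kk ∈ Finset.range n, c (kk+1) * ((C.card : ℝ) * dualDistDistrib C (kk+1)) ≤ 0 := by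
      refine Finset.sum_nonpos fun kk hkk => ?_
      have hkkn : kk + 1 ≤ n := by have := Finset.mem_range.1 hkk; omega
      rcases le_or_gt (kk+1) τ with hcase | hcase
      · rw [hdesign (kk+1) (by omega) hcase]
        simp
      · have hc : c (kk+1) ≤ 0 := hB1b (kk+1) (by omega) hkkn
        have hd : 0 ≤ (C.card : ℝ) * dualDistDistrib C (kk+1) :=
          mul_nonneg (le_of_lt hM0) (hdualnn (kk+1) hkkn)
        exact mul_nonpos_of_nonpos_of_nonneg hc hd
    linarith
  have h4 : f 0 ≤ c 0 * (C.card : ℝ) := le_trans h1 h3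
  rw [div_le_iff₀ hB1a]
  linarith [h4]
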